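/- Let n ≥ 2 and let A, B ∈ GL_n(ℂ) with rank(A − B) = 1. If spec(A) ∩ spec(B) = ∅, then A and B have no common eigenvector and stabilize no common hyperplane; i.e., ⟨A, B⟩ acts irreducibly on ℂⁿ. -/

import Mathlib

open Module

lemma quot_eig {V : Type*} [AddCommGroup V] [Module ℂ V] [FiniteDimensional ℂ V]
    (f : Module.End ℂ V) (W : Submodule ℂ V) (h : W ≤ W.comap f) {μ : ℂ}
    (hμ : Module.End.HasEigenvalue (W.mapQ W f h : Module.End ℂ (V ⧸ W)) μ) :
    f.HasEigenvalue μ := by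
  by_contra hc
  rw [Module.End.hasEigenvalue_iff_mem_spectrum, spectrum.mem_iff, not_not] at hc
  set T : Module.End ℂ V := algebraMap ℂ (Module.End ℂ V) μ - f with hT
  have hbij : Function.Bijective T := (Module.End.isUnit_iff T).mp hc
  obtain ⟨v, hv⟩ := hμ.exists_hasEigenvector
  obtain ⟨x, rfl⟩ := W.mkQ_surjective v
  have hfx : W.mkQ (f x) = μ • W.mkQ x := by
    simpa [Submodule.mapQ_apply, Submodule.mkQ_apply] using hv.apply_eq_smul
  have hTx : T x ∈ W := by
    rw [← Submodule.Quotient.mk_eq_zero]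
    have : W.mkQ (T x) = μ • W.mkQ x - W.mkQ (f x) := by
      simp [hT, Module.algebraMap_end_apply, map_sub, map_smul]
    rw [show (Submodule.Quotient.mk (T x) : V ⧸ W) = W.mkQ (T x) from rfl, this, hfx,
      sub_self]
  have hmaple : Submodule.map T W ≤ W := by
    rintro _ ⟨y, hy, rfl⟩
    have : f y ∈ W := h hy
    simpa [hT, Module.algebraMap_end_apply] using W.sub_mem (W.smul_mem μ hy) this
  have hmapeq : Submodule.map T W = W := by
    apply Submodule.eq_of_le_of_finrank_eq hmaple
    exact (LinearEquiv.finrank_eq (Submodule.equivMapOfInjective T hbij.injective W)).symm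
  have hxW : x ∈ W := by
    rw [← hmapeq] at hTx
    obtain ⟨y, hy, hyx⟩ := hTx
    rwa [← hbij.injective hyx]
  exact hv.2 ((Submodule.Quotient.mk_eq_zero W).mpr hxW)

lemma key_irred {V : Type*} [AddCommGroup V] [Module ℂ V] [FiniteDimensional ℂ V]
    (f g : Module.End ℂ V)
    (hrk : finrank ℂ (LinearMap.range (f - g)) = 1)
    (hdisj : ∀ μ : ℂ, f.HasEigenvalue μ → g.HasEigenvalue μ → False)
    (W : Submodule ℂ V) (hf : ∀ x ∈ W, f x ∈ W) (hg : ∀ x ∈ W, g x ∈ W) :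
    W = ⊥ ∨ W = ⊤ := by
  by_contra hc
  push_neg at hc
  obtain ⟨hWbot, hWtop⟩ := hc
  by_cases hcase : ∀ x ∈ W, f x = g x
  · haveI : Nontrivial W := Submodule.nontrivial_iff_ne_bot.mpr hWbot
    set f' : Module.End ℂ W := f.restrict (fun x hx => hf x hx) with hf'
    obtain ⟨μ, hμ⟩ := Module.End.exists_eigenvalue f'
    obtain ⟨v, hv⟩ := hμ.exists_hasEigenvector
    have hfv : f ↑v = μ • (↑v : V) := by
      have := hv.apply_eq_smul
      have h2 : (↑(f' v) : V) = f ↑v := rfl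
      rw [this] at h2
      exact h2.symm.trans rfl
    have hv0 : (↑v : V) ≠ 0 := Subtype.coe_ne_coe.mpr hv.2
    have hfe : f.HasEigenvalue μ :=
      Module.End.hasEigenvalue_of_hasEigenvector
        ⟨Module.End.mem_eigenspace_iff.mpr hfv, hv0⟩
    have hge : g.HasEigenvalue μ :=
      Module.End.hasEigenvalue_of_hasEigenvector
        ⟨Module.End.mem_eigenspace_iff.mpr ((hcase ↑v v.2).symm.trans hfv), hv0⟩
    exact hdisj μ hfe hge
  · push_neg at hcase
    obtain ⟨w, hw, hwne⟩ := hcase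
    set u : V := (f - g) w with hu
    have hu0 : u ≠ 0 := sub_ne_zero.mpr hwne
    have huW : u ∈ W := by
      simpa [hu] using W.sub_mem (hf w hw) (hg w hw)
    have hspan : LinearMap.range (f - g) = Submodule.span ℂ {u} := by
      symm
      apply Submodule.eq_of_le_of_finrank_eq
      · rw [Submodule.span_le, Set.singleton_subset_iff]
        exact ⟨w, rfl⟩
      · rw [finrank_span_singleton hu0, hrk]
    have hrange : ∀ x : V, f x - g x ∈ W := by
      intro x
      have : (f - g) x ∈ LinearMap.range (f - g) := ⟨x, rfl⟩
      rw [hspan] at this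
      have hle : Submodule.span ℂ ({u} : Set V) ≤ W :=
        Submodule.span_le.mpr (Set.singleton_subset_iff.mpr huW)
      simpa using hle this
    have hWf : W ≤ W.comap f := fun x hx => hf x hx
    have hWg : W ≤ W.comap g := fun x hx => hg x hx
    haveI : Nontrivial (V ⧸ W) :=
      Submodule.Quotient.nontrivial_iff.mpr hWtop
    obtain ⟨μ, hμ⟩ := Module.End.exists_eigenvalue (W.mapQ W f hWf)
    have hbareq : W.mapQ W f hWf = W.mapQ W g hWg := by
      apply Submodule.linearMap_qext
      ext x
      simp only [LinearMap.comp_apply, Submodule.mapQ_apply, Submodule.mkQ_apply]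
      exact (Submodule.Quotient.eq W).mpr (hrange x)
    have hfe : f.HasEigenvalue μ := quot_eig f W hWf hμ
    have hge : g.HasEigenvalue μ := quot_eig g W hWg (hbareq ▸ hμ)
    exact hdisj μ hfe hge

theorem stmt_9 (n : ℕ) (hn : 2 ≤ n) (A B : Matrix (Fin n) (Fin n) ℂ)
    (hA : IsUnit A) (hB : IsUnit B)
    (hrk : (A - B).rank = 1)
    (hspec : spectrum ℂ A ∩ spectrum ℂ B = ∅) :
    (¬ ∃ v : Fin n → ℂ, v ≠ 0 ∧ ∃ μ ν : ℂ, A.mulVec v = μ • v ∧ B.mulVec v = ν • v) ∧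
    (¬ ∃ W : Submodule ℂ (Fin n → ℂ), Module.finrank ℂ W = n - 1 ∧
        (∀ x ∈ W, A.mulVec x ∈ W) ∧ (∀ x ∈ W, B.mulVec x ∈ W)) ∧
    (∀ W : Submodule ℂ (Fin n → ℂ),
        (∀ x ∈ W, A.mulVec x ∈ W) → (∀ x ∈ W, B.mulVec x ∈ W) → W = ⊥ ∨ W = ⊤) := by
  set f : Module.End ℂ (Fin n → ℂ) := Matrix.mulVecLin A with hf
  set g : Module.End ℂ (Fin n → ℂ) := Matrix.mulVecLin B with hg
  have hfA : f = Matrix.toLinAlgEquiv' A := by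
    ext v; simp [hf, Matrix.toLinAlgEquiv'_apply, Matrix.mulVecLin_apply]
  have hgB : g = Matrix.toLinAlgEquiv' B := by
    ext v; simp [hg, Matrix.toLinAlgEquiv'_apply, Matrix.mulVecLin_apply]
  have hspecA : spectrum ℂ f = spectrum ℂ A := by
    rw [hfA]; exact AlgEquiv.spectrum_eq Matrix.toLinAlgEquiv' A
  have hspecB : spectrum ℂ g = spectrum ℂ B := by
    rw [hgB]; exact AlgEquiv.spectrum_eq Matrix.toLinAlgEquiv' B
  have hdisj : ∀ μ : ℂ, f.HasEigenvalue μ → g.HasEigenvalue μ → False := by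
    intro μ h1 h2
    have m1 : μ ∈ spectrum ℂ A := hspecA ▸
      (Module.End.hasEigenvalue_iff_mem_spectrum.mp h1)
    have m2 : μ ∈ spectrum ℂ B := hspecB ▸
      (Module.End.hasEigenvalue_iff_mem_spectrum.mp h2)
    have : μ ∈ spectrum ℂ A ∩ spectrum ℂ B := ⟨m1, m2⟩
    rw [hspec] at this
    exact this
  have hrk' : finrank ℂ (LinearMap.range (f - g)) = 1 := by
    have : f - g = (A - B).mulVecLin := by
      ext v; simp [hf, hg, Matrix.sub_mulVec]
    rw [this]
    exact hrk
  have main : ∀ W : Submodule ℂ (Fin n → ℂ),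
      (∀ x ∈ W, A.mulVec x ∈ W) → (∀ x ∈ W, B.mulVec x ∈ W) → W = ⊥ ∨ W = ⊤ := by
    intro W h1 h2
    exact key_irred f g hrk' hdisj W h1 h2
  refine ⟨?_, ?_, main⟩
  · rintro ⟨v, hv0, μ, ν, hμ, hν⟩
    have hWA : ∀ x ∈ Submodule.span ℂ ({v} : Set (Fin n → ℂ)), A.mulVec x ∈
        Submodule.span ℂ ({v} : Set (Fin n → ℂ)) := by
      intro x hx
      obtain ⟨c, rfl⟩ := Submodule.mem_span_singleton.mp hx
      rw [Matrix.mulVec_smul, hμ, smul_smul]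
      exact Submodule.smul_mem _ _ (Submodule.mem_span_singleton_self v)
    have hWB : ∀ x ∈ Submodule.span ℂ ({v} : Set (Fin n → ℂ)), B.mulVec x ∈
        Submodule.span ℂ ({v} : Set (Fin n → ℂ)) := by
      intro x hx
      obtain ⟨c, rfl⟩ := Submodule.mem_span_singleton.mp hx
      rw [Matrix.mulVec_smul, hν, smul_smul]
      exact Submodule.smul_mem _ _ (Submodule.mem_span_singleton_self v)
    rcases main _ hWA hWB with h | h
    · exact hv0 (Submodule.span_eq_bot.mp h v rfl)
    · have h1 : finrank ℂ (Submodule.span ℂ ({v} : Set (Fin n → ℂ))) = 1 :=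
        finrank_span_singleton hv0
      rw [h, finrank_top] at h1
      simp [Module.finrank_pi] at h1
      omega
  · rintro ⟨W, hWrk, h1, h2⟩
    rcases main W h1 h2 with h | h
    · rw [h, finrank_bot] at hWrk; omega
    · rw [h, finrank_top] at hWrk
      simp [Module.finrank_pi] at hWrk
      omega
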